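/- Let H₀ > 0 and α ∈ ℝ, and let I be an open interval of t on which (√15/6)(H₀ t + α) ∈ (−π/2, π/2). Then the function ψ(t) = 3H₀ (1 + (1/√15) tan((√15/6)(H₀ t + α))) satisfies the de Sitter torsion evolution equation ψ̇ + 5H₀ ψ − (5/6) ψ² − 8H₀² = 0 at every t ∈ I. -/

import Mathlib

open Real

/-- The function `ψ(t) = 3H₀(1 + (1/√15) tan((√15/6)(H₀ t + α)))`
satisfies the de Sitter torsion evolution equation
`ψ̇ + 5H₀ψ − (5/6)ψ² − 8H₀² = 0` on any open interval where the argument of the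
tangent lies in (−π/2, π/2). -/
theorem deSitter_torsion_solution
    (H₀ α : ℝ) (hH₀ : 0 < H₀)
    (I : Set ℝ) (hI : IsOpen I)
    (hrange : ∀ t ∈ I,
      (Real.sqrt 15 / 6) * (H₀ * t + α) ∈ Set.Ioo (-(π/2)) (π/2))
    (ψ : ℝ → ℝ)
    (hψ : ψ = fun t =>
      3 * H₀ * (1 + (1 / Real.sqrt 15) * Real.tan ((Real.sqrt 15 / 6) * (H₀ * t + α)))) :
    ∀ t ∈ I,
      deriv ψ t + 5 * H₀ * ψ t - (5/6) * (ψ t) ^ 2 - 8 * H₀ ^ 2 = 0 := by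
  intro t ht
  have hs : Real.sqrt 15 ^ 2 = 15 := Real.sq_sqrt (by norm_num)
  have hs0 : Real.sqrt 15 ≠ 0 := by positivity
  set u : ℝ := (Real.sqrt 15 / 6) * (H₀ * t + α) with hu
  have hcos : Real.cos u ≠ 0 :=
    ne_of_gt (Real.cos_pos_of_mem_Ioo (hrange t ht))
  -- derivative of the inner linear function
  have hlin : HasDerivAt (fun s : ℝ => (Real.sqrt 15 / 6) * (H₀ * s + α))
      (Real.sqrt 15 / 6 * H₀) t := by
    have : HasDerivAt (fun s : ℝ => H₀ * s + α) H₀ t := by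
      simpa using ((hasDerivAt_id t).const_mul H₀).add_const α
    simpa [mul_comm] using this.const_mul (Real.sqrt 15 / 6)
  have htan : HasDerivAt (fun s : ℝ =>
      Real.tan ((Real.sqrt 15 / 6) * (H₀ * s + α)))
      (1 / Real.cos u ^ 2 * (Real.sqrt 15 / 6 * H₀)) t :=
    by have h := (Real.hasDerivAt_tan hcos).comp t hlin; exact h
  have hψ' : HasDerivAt ψ
      (3 * H₀ * ((1 / Real.sqrt 15) *
        (1 / Real.cos u ^ 2 * (Real.sqrt 15 / 6 * H₀)))) t := by
    rw [hψ]
    simpa using ((htan.const_mul (1 / Real.sqrt 15)).const_add 1).const_mul (3 * H₀)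
  rw [hψ'.deriv, hψ]
  have htan2 : Real.tan u ^ 2 + 1 = 1 / Real.cos u ^ 2 := by
    rw [Real.tan_eq_sin_div_cos]
    field_simp
    exact Real.sin_sq_add_cos_sq u
  simp only
  rw [← hu, ← htan2]
  field_simp
  linear_combination (3 * H₀ ^ 2 * Real.tan u ^ 2) * hs
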